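/- Let p be a prime, N a positive integer with gcd(N,p)=1, and f the multiplicative order of p modulo N. If Σ_{i=0}^{f-1} [t p^i]_N = fN/2 for every integer t coprime to N (where [x]_N denotes the least nonnegative residue of x mod N), and f is odd, then N ≡ 2 (mod 4), i.e., 2 exactly divides N. -/

import Mathlib

/-- If the Gauss sum `G_{p^f}(η_N)` is pure (Stickelberger criterion) and `f` is odd,
then `2 ‖ N`, i.e. `N ≡ 2 (mod 4)`. -/
theorem stmt_4 (p N : ℕ) (hp : p.Prime) (hN : 0 < N) (hcop : Nat.Coprime N p)
    (f : ℕ) (hf : f = orderOf ((p : ZMod N)))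
    (hpure : ∀ t : ℤ, Int.gcd t N = 1 →
      2 * ∑ i ∈ Finset.range f, (t * (p : ℤ) ^ i) % N = (f : ℤ) * N)
    (hodd : Odd f) :
    N % 4 = 2 := by
  have h1 := hpure 1 (by simp)
  simp only [one_mul] at h1
  set S : ℤ := ∑ i ∈ Finset.range f, ((p : ℤ) ^ i) % (N : ℤ) with hS
  have hfodd : Odd (f : ℤ) := by exact_mod_cast hodd
  have hNeven : Even ((N : ℤ)) := by
    have hev : Even ((f : ℤ) * N) := ⟨S, by linarith⟩
    rcases Int.even_mul.mp hev with h | h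
    · exact absurd h (Int.not_even_iff_odd.mpr hfodd)
    · exact h
  have h2N : (2 : ℤ) ∣ (N : ℤ) := hNeven.two_dvd
  have hpodd : Odd ((p : ℤ)) := by
    have h2 : (2 : ℕ) ∣ N := by exact_mod_cast h2N
    have hc2 : Nat.Coprime 2 p := Nat.Coprime.coprime_dvd_left h2 hcop
    have hpne : p ≠ 2 := by
      intro h; rw [h] at hc2; simp [Nat.Coprime] at hc2
    exact_mod_cast hp.odd_of_ne_two hpne
  have hSodd : Odd S := by
    rw [Int.odd_iff, hS, Finset.sum_int_mod]
    have hterm : ∀ i ∈ Finset.range f, ((p : ℤ) ^ i % N) % 2 = 1 := by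
      intro i _
      rw [Int.emod_emod_of_dvd _ h2N, ← Int.odd_iff]
      exact hpodd.pow
    rw [Finset.sum_congr rfl hterm]
    simpa using Int.odd_iff.mp hfodd
  obtain ⟨n, hn⟩ := h2N
  have hSeq : S = (f : ℤ) * n := by
    have : 2 * S = (f : ℤ) * (2 * n) := by rw [← hn]; exact h1
    linarith
  have hnodd : Odd n := (Int.odd_mul.mp (hSeq ▸ hSodd)).2
  obtain ⟨j, hj⟩ := hnodd
  have hN4 : (N : ℤ) = 4 * j + 2 := by rw [hn, hj]; ring
  omega
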